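/- arXiv:1002.2028 — 4 statements merged into one kernel-verified Lean document; each statement's English description precedes it below -/
import Mathlib

section
/- Let $\Psi = (\psi_1,\ldots,\psi_t)$ be linear forms $\mathbb{Z}^D \to \mathbb{Z}$. For each $i \geq 1$ let $\Psi^{[i]}$ denote the linear subspace of $\mathbb{R}^t$ spanned by the vectors $(\psi_1(\mathbf{n})^j,\ldots,\psi_t(\mathbf{n})^j)$ for $1 \leq j \leq i$ and $\mathbf{n} \in \mathbb{Z}^D$. Then $\Psi^{[i]}$ equals the span of all coordinatewise products $\Psi(\mathbf{n}_1)\cdots\Psi(\mathbf{n}_j)$ with $1 \leq j \leq i$ and $\mathbf{n}_1,\ldots,\mathbf{n}_j \in \mathbb{Z}^D$. -/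
open Finset

lemma inner_ie {j : ℕ} (T : Finset (Fin j)) :
    (∑ S : Finset (Fin j), if T ⊆ S then (-1 : ℝ) ^ (j - S.card) else 0)
      = if T = univ then 1 else 0 := by
  classical
  rw [Finset.sum_ite, Finset.sum_const_zero, add_zero]
  have key : ∑ S ∈ Finset.univ.filter (fun S => T ⊆ S), (-1 : ℝ) ^ (j - S.card)
      = ∑ U ∈ Tᶜ.powerset, (-1 : ℝ) ^ (j - (T ∪ U).card) := by
    refine Finset.sum_nbij' (fun S => S \ T) (fun U => T ∪ U) ?_ ?_ ?_ ?_ ?_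
    · intro S hS
      rw [Finset.mem_powerset]
      intro a ha
      rw [Finset.mem_compl]
      exact (Finset.mem_sdiff.mp ha).2
    · intro U hU
      simp only [Finset.mem_filter, Finset.mem_univ, true_and]
      exact Finset.subset_union_left
    · intro S hS
      simp only [Finset.mem_filter, Finset.mem_univ, true_and] at hS
      exact Finset.union_sdiff_of_subset hS
    · intro U hU
      rw [Finset.mem_powerset] at hU
      rw [Finset.union_sdiff_cancel_left]
      exact Finset.disjoint_left.mpr fun a haT haU =>
        (Finset.mem_compl.mp (hU haU)) haT
    · intro S hS
      simp only [Finset.mem_filter, Finset.mem_univ, true_and] at hS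
      rw [Finset.union_sdiff_of_subset hS]
  rw [key]
  have hcard : ∀ U ∈ Tᶜ.powerset, (T ∪ U).card = T.card + U.card := by
    intro U hU
    rw [Finset.mem_powerset] at hU
    rw [Finset.card_union_of_disjoint]
    exact Finset.disjoint_left.mpr fun a haT haU => (Finset.mem_compl.mp (hU haU)) haT
  have hTc : j - T.card = Tᶜ.card := by
    rw [Finset.card_compl, Fintype.card_fin]
  calc ∑ U ∈ Tᶜ.powerset, (-1 : ℝ) ^ (j - (T ∪ U).card)
      = ∑ U ∈ Tᶜ.powerset, (-1 : ℝ) ^ (Tᶜ.card) * (-1) ^ U.card := by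
        refine Finset.sum_congr rfl fun U hU => ?_
        rw [hcard U hU]
        have hU' := Finset.mem_powerset.mp hU
        have hle : U.card ≤ Tᶜ.card := Finset.card_le_card hU'
        have h1 : j - (T.card + U.card) = Tᶜ.card - U.card := by
          have := Finset.card_le_univ T
          rw [Fintype.card_fin] at this
          rw [Finset.card_compl, Fintype.card_fin]
          omega
        rw [h1]
        have h2 : (-1 : ℝ) ^ (Tᶜ.card - U.card) * (-1) ^ U.card = (-1) ^ Tᶜ.card := by
          rw [← pow_add, Nat.sub_add_cancel hle]
        calc (-1 : ℝ) ^ (Tᶜ.card - U.card)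
            = (-1 : ℝ) ^ (Tᶜ.card - U.card) * ((-1) ^ U.card * (-1) ^ U.card) := by
              rw [← pow_add, ← two_mul, pow_mul]; norm_num
          _ = (-1 : ℝ) ^ Tᶜ.card * (-1) ^ U.card := by rw [← mul_assoc, h2]
    _ = (-1 : ℝ) ^ Tᶜ.card * ∑ U ∈ Tᶜ.powerset, (-1 : ℝ) ^ U.card := by
        rw [Finset.mul_sum]
    _ = if T = univ then 1 else 0 := by
        have hz : (∑ U ∈ Tᶜ.powerset, (-1 : ℝ) ^ U.card)
            = if Tᶜ = ∅ then 1 else 0 := by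
          have := Finset.sum_powerset_neg_one_pow_card (x := Tᶜ)
          have := congrArg (fun z : ℤ => (z : ℝ)) this
          push_cast at this
          convert this using 2 <;> simp
        rw [hz]
        by_cases h : T = univ
        · subst h
          simp
        · have h' : Tᶜ ≠ ∅ := by
            rw [Ne, Finset.compl_eq_empty_iff]
            exact h
          simp [h, h']

lemma polarization {j : ℕ} (x : Fin j → ℝ) :
    ∑ S : Finset (Fin j), (-1 : ℝ) ^ (j - S.card) * (∑ a ∈ S, x a) ^ j
      = (j.factorial : ℝ) * ∏ a, x a := by
  classical
  have expand : ∀ S : Finset (Fin j), (∑ a ∈ S, x a) ^ j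
      = ∑ g ∈ Fintype.piFinset (fun _ : Fin j => S), ∏ m, x (g m) := by
    intro S
    have h1 : (∑ a ∈ S, x a) ^ j = ∏ _m : Fin j, (∑ a ∈ S, x a) := by
      simp [Finset.prod_const]
    rw [h1, Finset.prod_univ_sum]
  calc ∑ S : Finset (Fin j), (-1 : ℝ) ^ (j - S.card) * (∑ a ∈ S, x a) ^ j
      = ∑ S : Finset (Fin j), ∑ g : Fin j → Fin j,
          (if ∀ m, g m ∈ S then (-1 : ℝ) ^ (j - S.card) * ∏ m, x (g m) else 0) := by
        refine Finset.sum_congr rfl fun S _ => ?_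
        rw [expand S, Finset.mul_sum]
        have hset : Fintype.piFinset (fun _ : Fin j => S)
            = Finset.univ.filter (fun g : Fin j → Fin j => ∀ m, g m ∈ S) := by
          ext g; simp [Fintype.mem_piFinset]
        rw [hset, Finset.sum_filter]
    _ = ∑ g : Fin j → Fin j, ∑ S : Finset (Fin j),
          (if ∀ m, g m ∈ S then (-1 : ℝ) ^ (j - S.card) * ∏ m, x (g m) else 0) :=
        Finset.sum_comm
    _ = ∑ g : Fin j → Fin j, (∏ m, x (g m)) *
          (if Finset.image g univ = univ then 1 else 0) := by
        refine Finset.sum_congr rfl fun g _ => ?_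
        rw [← inner_ie (Finset.image g univ), Finset.mul_sum]
        refine Finset.sum_congr rfl fun S _ => ?_
        have hcond : (∀ m, g m ∈ S) ↔ Finset.image g univ ⊆ S := by
          constructor
          · intro h a ha
            obtain ⟨m, _, rfl⟩ := Finset.mem_image.mp ha
            exact h m
          · intro h m
            exact h (Finset.mem_image.mpr ⟨m, Finset.mem_univ m, rfl⟩)
        rw [if_congr hcond rfl rfl]
        split <;> ring
    _ = ∑ g ∈ Finset.univ.filter
          (fun g : Fin j → Fin j => Finset.image g univ = univ), ∏ m, x (g m) := by
        rw [Finset.sum_filter]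
        refine Finset.sum_congr rfl fun g _ => ?_
        split <;> ring
    _ = ∑ _σ : Equiv.Perm (Fin j), ∏ a, x a := by
        refine Finset.sum_bij' (fun g hg => Equiv.ofBijective g ?_)
          (fun σ _ => ⇑σ) ?_ ?_ ?_ ?_ ?_
        · simp only [Finset.mem_filter, Finset.mem_univ, true_and] at hg
          rw [Fintype.bijective_iff_surjective_and_card]
          refine ⟨fun b => ?_, rfl⟩
          have : b ∈ Finset.image g univ := by rw [hg]; exact Finset.mem_univ b
          obtain ⟨a, _, ha⟩ := Finset.mem_image.mp this
          exact ⟨a, ha⟩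
        · intro g hg; exact Finset.mem_univ _
        · intro σ _
          simp only [Finset.mem_filter, Finset.mem_univ, true_and]
          ext b
          simp only [Finset.mem_image, Finset.mem_univ, true_and, iff_true]
          exact ⟨σ.symm b, σ.apply_symm_apply b⟩
        · intro g hg; rfl
        · intro σ _; ext a; simp [Equiv.ofBijective]
        · intro g hg
          simp only [Finset.mem_filter, Finset.mem_univ, true_and] at hg
          refine Equiv.prod_comp (Equiv.ofBijective g ?_) x
          rw [Fintype.bijective_iff_surjective_and_card]
          refine ⟨fun b => ?_, rfl⟩
          have : b ∈ Finset.image g univ := by rw [hg]; exact Finset.mem_univ b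
          obtain ⟨a, _, ha⟩ := Finset.mem_image.mp this
          exact ⟨a, ha⟩
    _ = (j.factorial : ℝ) * ∏ a, x a := by
        rw [Finset.sum_const, Finset.card_univ, Fintype.card_perm, Fintype.card_fin,
          nsmul_eq_mul]

/-- `Ψ^{[i]}`: the span of the coordinatewise powers `(ψ₁(n)^j, …, ψ_t(n)^j)` for
`1 ≤ j ≤ i` and `n ∈ ℤ^D`. -/
def powerSpan (D t : ℕ) (ψ : Fin t → ((Fin D → ℤ) →+ ℤ)) (i : ℕ) :
    Submodule ℝ (Fin t → ℝ) :=
  Submodule.span ℝ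
    {v : Fin t → ℝ | ∃ j, 1 ≤ j ∧ j ≤ i ∧ ∃ n : Fin D → ℤ,
      v = fun k => ((ψ k n : ℤ) : ℝ) ^ j}

/-- `Ψ^{[i]}` equals the span of all coordinatewise products `Ψ(n₁)⋯Ψ(n_j)` with
`1 ≤ j ≤ i` and `n₁,…,n_j ∈ ℤ^D`. -/
theorem powerSpan_eq_productSpan (D t : ℕ) (ψ : Fin t → ((Fin D → ℤ) →+ ℤ)) (i : ℕ)
    (hi : 1 ≤ i) :
    powerSpan D t ψ i =
      Submodule.span ℝ
        {v : Fin t → ℝ | ∃ j, 1 ≤ j ∧ j ≤ i ∧ ∃ n : Fin j → (Fin D → ℤ),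
          v = ∏ a : Fin j, fun k : Fin t => ((ψ k (n a) : ℤ) : ℝ)} := by
  apply le_antisymm
  · apply Submodule.span_le.mpr
    rintro v ⟨j, hj1, hji, n, rfl⟩
    apply Submodule.subset_span
    refine ⟨j, hj1, hji, fun _ => n, ?_⟩
    funext k
    rw [Finset.prod_apply]
    simp [Finset.prod_const]
  · apply Submodule.span_le.mpr
    rintro v ⟨j, hj1, hji, n, rfl⟩
    have key : (j.factorial : ℝ) • (∏ a : Fin j, fun k : Fin t => ((ψ k (n a) : ℤ) : ℝ))
        = ∑ S : Finset (Fin j), ((-1 : ℝ) ^ (j - S.card)) •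
            (fun k : Fin t => ((ψ k (∑ a ∈ S, n a) : ℤ) : ℝ) ^ j) := by
      funext k
      simp only [Pi.smul_apply, Finset.sum_apply, Finset.prod_apply, smul_eq_mul]
      rw [← polarization (fun a => ((ψ k (n a) : ℤ) : ℝ))]
      refine Finset.sum_congr rfl fun S _ => ?_
      congr 2
      rw [map_sum]
      push_cast
      rfl
    have hmem : ∀ S : Finset (Fin j),
        (fun k : Fin t => ((ψ k (∑ a ∈ S, n a) : ℤ) : ℝ) ^ j) ∈ powerSpan D t ψ i :=
      fun S => Submodule.subset_span ⟨j, hj1, hji, ∑ a ∈ S, n a, rfl⟩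
    have hsum : (j.factorial : ℝ) • (∏ a : Fin j, fun k : Fin t => ((ψ k (n a) : ℤ) : ℝ))
        ∈ powerSpan D t ψ i := by
      rw [key]
      exact Submodule.sum_mem _ fun S _ => Submodule.smul_mem _ _ (hmem S)
    have hne : (j.factorial : ℝ) ≠ 0 := by
      exact_mod_cast j.factorial_ne_zero
    have h2 := Submodule.smul_mem _ ((j.factorial : ℝ)⁻¹) hsum
    rwa [smul_smul, inv_mul_cancel₀ hne, one_smul] at h2
end

section
/- Let $\Psi = (\psi_1,\ldots,\psi_t)$ be linear forms $\mathbb{Z}^D \to \mathbb{Z}$ and for $i \geq 1$ let $\Psi^{[i]} \subseteq \mathbb{R}^t$ be the span of the vectors $(\psi_1(\mathbf{n})^j,\ldots,\psi_t(\mathbf{n})^j)$ for $1 \leq j \leq i$, $\mathbf{n} \in \mathbb{Z}^D$ (with $\Psi^{[0]} := \{0\}$). Then for all $i, j \geq 0$ the coordinatewise product satisfies $\Psi^{[i]} \cdot \Psi^{[j]} \subseteq \Psi^{[i+j]}$, i.e. for every $u \in \Psi^{[i]}$ and $v \in \Psi^{[j]}$ the coordinatewise product $u \cdot v$ lies in $\Psi^{[i+j]}$.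 -/
open Finset

/-- Polarization: `x^a * y^b` (coordinatewise) lies in the span of the powers
`(x + r•y)^(a+b)` for natural `r`. -/
lemma pow_mul_pow_mem_span (t d : ℕ) (x y : Fin t → ℝ) (a b : ℕ) (hab : a + b = d) :
    (fun k => x k ^ a * y k ^ b) ∈
      Submodule.span ℝ {v : Fin t → ℝ | ∃ r : ℕ, v = fun k => (x k + (r : ℝ) * y k) ^ d} := by
  classical
  set A : Matrix (Fin (d+1)) (Fin (d+1)) ℝ :=
    fun r s => ((r : ℕ) : ℝ) ^ (s : ℕ) * (d.choose s) with hA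
  have hdet : IsUnit A.det := by
    have hAeq : A = (Matrix.vandermonde fun r : Fin (d+1) => ((r : ℕ) : ℝ)) *
        Matrix.diagonal (fun s : Fin (d+1) => ((d.choose s : ℕ) : ℝ)) := by
      ext r s
      simp [Matrix.mul_diagonal, Matrix.vandermonde, hA]
    rw [hAeq, Matrix.det_mul, Matrix.det_vandermonde, Matrix.det_diagonal]
    apply IsUnit.mul <;> rw [isUnit_iff_ne_zero]
    · apply Finset.prod_ne_zero_iff.2
      intro r _
      apply Finset.prod_ne_zero_iff.2
      intro s hs
      have : (r : ℕ) < (s : ℕ) := Fin.lt_def.1 (Finset.mem_Ioi.1 hs)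
      have : ((r:ℕ):ℝ) < ((s:ℕ):ℝ) := by exact_mod_cast this
      linarith
    · apply Finset.prod_ne_zero_iff.2
      intro s _
      have : 0 < d.choose s := Nat.choose_pos (by omega)
      positivity
  set m : Fin (d+1) → (Fin t → ℝ) := fun s => fun k => x k ^ (d - (s : ℕ)) * y k ^ (s : ℕ) with hm
  set w : Fin (d+1) → (Fin t → ℝ) := fun r => fun k => (x k + ((r : ℕ) : ℝ) * y k) ^ d with hw
  have hwm : ∀ r, w r = ∑ s, A r s • m s := by
    intro r
    funext k
    have := add_pow (((r:ℕ):ℝ) * y k) (x k) d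
    rw [add_comm] at this
    simp only [hw]
    rw [this]
    rw [Finset.sum_apply]
    rw [← Fin.sum_univ_eq_sum_range (fun s => (((r:ℕ):ℝ) * y k) ^ s * x k ^ (d - s) * (d.choose s))]
    apply Finset.sum_congr rfl
    intro s _
    simp [hA, hm, mul_pow]
    ring
  have hmem : m ⟨b, by omega⟩ = ∑ r, (A⁻¹ ⟨b, by omega⟩ r) • w r := by
    have h1 : ∑ r, (A⁻¹ ⟨b, by omega⟩ r) • w r
        = ∑ s, (A⁻¹ * A) ⟨b, by omega⟩ s • m s := by
      simp only [hwm, Finset.smul_sum, Matrix.mul_apply]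
      rw [Finset.sum_comm]
      apply Finset.sum_congr rfl
      intro s _
      rw [Finset.sum_smul]
      apply Finset.sum_congr rfl
      intro r _
      rw [smul_smul]
    rw [h1, Matrix.nonsing_inv_mul A hdet]
    simp [Matrix.one_apply]
  have hgoal : (fun k => x k ^ a * y k ^ b) = m ⟨b, by omega⟩ := by
    funext k
    simp only [hm]
    congr 1
    congr 1
    omega
  rw [hgoal, hmem]
  apply Submodule.sum_mem
  intro r _
  apply Submodule.smul_mem
  apply Submodule.subset_span
  exact ⟨(r : ℕ), rfl⟩

/-- **Filtration property** -/
theorem powerSpan_mul_subset (D t : ℕ) (ψ : Fin t → ((Fin D → ℤ) →+ ℤ)) (i j : ℕ)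
    (u v : Fin t → ℝ) (hu : u ∈ powerSpan D t ψ i) (hv : v ∈ powerSpan D t ψ j) :
    u * v ∈ powerSpan D t ψ (i + j) := by
  induction hv using Submodule.span_induction with
  | mem v hv' =>
    induction hu using Submodule.span_induction with
    | mem u hu' =>
      obtain ⟨a, ha1, hai, n, rfl⟩ := hu'
      obtain ⟨b, hb1, hbj, m, rfl⟩ := hv'
      have hk := pow_mul_pow_mem_span t (a + b)
        (fun k => ((ψ k n : ℤ) : ℝ)) (fun k => ((ψ k m : ℤ) : ℝ)) a b rfl
      have hle : Submodule.span ℝ {w : Fin t → ℝ | ∃ r : ℕ,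
          w = fun k => (((ψ k n : ℤ) : ℝ) + (r : ℝ) * ((ψ k m : ℤ) : ℝ)) ^ (a + b)}
          ≤ powerSpan D t ψ (i + j) := by
        rw [Submodule.span_le]
        rintro w ⟨r, rfl⟩
        apply Submodule.subset_span
        refine ⟨a + b, by omega, by omega, n + (r : ℤ) • m, ?_⟩
        funext k
        push_cast [map_add, map_zsmul, smul_eq_mul]
        ring_nf
      have : (fun k => ((ψ k n : ℤ) : ℝ) ^ a * ((ψ k m : ℤ) : ℝ) ^ b)
          ∈ powerSpan D t ψ (i + j) := hle hk
      convert this using 1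
      rfl
    | zero => simp only [zero_mul]; exact zero_mem _
    | add u1 u2 _ _ h1 h2 => rw [add_mul]; exact add_mem h1 h2
    | smul c u _ h => rw [smul_mul_assoc]; exact Submodule.smul_mem _ c h
  | zero => rw [mul_zero]; exact zero_mem _
  | add v1 v2 _ _ h1 h2 => rw [mul_add]; exact add_mem h1 h2
  | smul c v _ h => rw [mul_smul_comm]; exact Submodule.smul_mem _ c h
end

section
/- Let $V$ be a finite nonempty set, $f : V \to [0,1]$, let $\mathcal{B}$ be a partition of $V$, let $E \subseteq V$, and let $\delta > 0$. Suppose $|\langle f - \mathbb{E}(f|\mathcal{B}), 1_E \rangle| \geq \delta$, where $\langle g, h\rangle = \mathbb{E}_{v \in V} g(v) h(v)$. Let $\mathcal{B}'$ be the common refinement of $\mathcal{B}$ with the partition $\{E, V \setminus E\}$. Then $\mathcal{E}(\mathcal{B}') - \mathcal{E}(\mathcal{B}) \geq \delta^2$, where $\mathcal{E}(\mathcal{P}) = \mathbb{E}_{v\in V}|\mathbb{E}(f|\mathcal{P})(v)|^2$ is the energy. -/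
open Finset

variable {V : Type*} [Fintype V]

/-- The conditional expectation of `f` with respect to the partition of `V` induced by the
labelling map `π : V → γ`: on each cell it equals the average of `f` over that cell. -/
noncomputable def condExp {γ : Type*} [DecidableEq γ] (f : V → ℝ) (π : V → γ) (v : V) : ℝ :=
  (∑ w ∈ univ.filter (fun w => π w = π v), f w) /
    ((univ.filter (fun w => π w = π v)).card : ℝ)

/-- The energy `𝔼_{v ∈ V} |𝔼(f|π)(v)|²` of a partition (given by a labelling `π`). -/
noncomputable def energy {γ : Type*} [DecidableEq γ] (f : V → ℝ) (π : V → γ) : ℝ :=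
  (Fintype.card V : ℝ)⁻¹ * ∑ v, (condExp f π v) ^ 2

/-- Orthogonality: `f - 𝔼(f|π)` is orthogonal to any function constant on cells of `π`. -/
lemma orth_aux {V : Type*} [Fintype V] {γ : Type*} [DecidableEq γ] (f : V → ℝ) (π : V → γ)
    (H : γ → ℝ) : ∑ v, (f v - condExp f π v) * H (π v) = 0 := by
  classical
  rw [← Finset.sum_fiberwise_of_maps_to (t := univ.image π)
    (fun x _ => Finset.mem_image_of_mem π (mem_univ x))]
  refine Finset.sum_eq_zero fun b hb => ?_
  have hcard : ((univ.filter (fun w => π w = b)).card : ℝ) ≠ 0 := by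
    obtain ⟨v, -, hv⟩ := Finset.mem_image.1 hb
    have hv' : v ∈ univ.filter (fun w => π w = b) := by simp [hv]
    have := Finset.card_pos.2 ⟨v, hv'⟩
    exact_mod_cast this.ne'
  have hfib : ∀ v ∈ univ.filter (fun w => π w = b),
      (f v - condExp f π v) * H (π v)
      = (f v - (∑ w ∈ univ.filter (fun w => π w = b), f w) /
          ((univ.filter (fun w => π w = b)).card : ℝ)) * H b := by
    intro v hv
    rw [mem_filter] at hv
    simp only [condExp, hv.2]
  rw [Finset.sum_congr rfl hfib, ← Finset.sum_mul, Finset.sum_sub_distrib,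
    Finset.sum_const, nsmul_eq_mul]
  rw [mul_div_cancel₀ _ hcard, sub_self, zero_mul]

/-- **Energy increment.** If `|⟨f - 𝔼(f|π), 1_E⟩| ≥ δ`, then the common refinement of `π`
with `{E, V∖E}` has energy at least `δ²` more than `π`. -/
theorem energy_increment [Nonempty V] {γ : Type*} [DecidableEq γ]
    (f : V → ℝ) (hf : ∀ v, f v ∈ Set.Icc (0 : ℝ) 1)
    (π : V → γ) (E : Set V) [DecidablePred (· ∈ E)] (δ : ℝ) (hδ : 0 < δ)
    (hcorr : δ ≤ |(Fintype.card V : ℝ)⁻¹ *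
      ∑ v, (f v - condExp f π v) * (if v ∈ E then (1 : ℝ) else 0)|) :
    δ ^ 2 ≤ energy f (fun v => (π v, if v ∈ E then true else false)) - energy f π := by
  classical
  set π' : V → γ × Bool := fun v => (π v, if v ∈ E then true else false) with hπ'
  set g : V → ℝ := condExp f π with hg
  set g' : V → ℝ := condExp f π' with hg'
  set e : V → ℝ := fun v => if v ∈ E then (1 : ℝ) else 0 with he
  have hN : (0 : ℝ) < (Fintype.card V : ℝ) := by
    exact_mod_cast Fintype.card_pos
  -- orthogonality facts
  have h1 : ∑ v, (f v - g' v) * e v = 0 := by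
    have := orth_aux f π' (fun b => if b.2 = true then (1 : ℝ) else 0)
    simpa [he, hπ', hg', apply_ite] using this
  have h2 : ∑ v, (f v - g v) * g v = 0 :=
    orth_aux f π (fun b => (∑ w ∈ univ.filter (fun w => π w = b), f w) /
      ((univ.filter (fun w => π w = b)).card : ℝ))
  have h3 : ∑ v, (f v - g' v) * g v = 0 :=
    orth_aux f π' (fun b => (∑ w ∈ univ.filter (fun w => π w = b.1), f w) /
      ((univ.filter (fun w => π w = b.1)).card : ℝ))
  -- hence (g' - g) ⊥ g and ⟨g'-g, e⟩ = ⟨f-g, e⟩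
  have hD : ∑ v, (g' v - g v) * g v = 0 := by
    have : ∑ v, (g' v - g v) * g v
        = ∑ v, (f v - g v) * g v - ∑ v, (f v - g' v) * g v := by
      rw [← Finset.sum_sub_distrib]
      exact Finset.sum_congr rfl fun v _ => by ring
    rw [this, h2, h3, sub_zero]
  have hA : ∑ v, (g' v - g v) * e v = ∑ v, (f v - g v) * e v := by
    have : ∑ v, (f v - g v) * e v - ∑ v, (g' v - g v) * e v
        = ∑ v, (f v - g' v) * e v := by
      rw [← Finset.sum_sub_distrib]
      exact Finset.sum_congr rfl fun v _ => by ring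
    rw [h1] at this
    linarith
  -- Pythagoras
  have hPy : ∑ v, (g' v - g v) ^ 2 = ∑ v, g' v ^ 2 - ∑ v, g v ^ 2 := by
    have expand : ∑ v, (g' v - g v) ^ 2
        = ∑ v, g' v ^ 2 - ∑ v, g v ^ 2 - 2 * ∑ v, (g' v - g v) * g v := by
      rw [Finset.mul_sum, ← Finset.sum_sub_distrib, ← Finset.sum_sub_distrib]
      exact Finset.sum_congr rfl fun v _ => by ring
    rw [expand, hD, mul_zero, sub_zero]
  -- Cauchy–Schwarz
  have hCS : (∑ v, (g' v - g v) * e v) ^ 2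
      ≤ (∑ v, (g' v - g v) ^ 2) * ∑ v, e v ^ 2 :=
    Finset.sum_mul_sq_le_sq_mul_sq univ _ _
  have hE : ∑ v, e v ^ 2 ≤ (Fintype.card V : ℝ) := by
    calc ∑ v, e v ^ 2 ≤ ∑ _v : V, (1 : ℝ) := by
          refine Finset.sum_le_sum fun v _ => ?_
          by_cases hv : v ∈ E <;> simp [he, hv]
      _ = (Fintype.card V : ℝ) := by simp
  have hT : (0 : ℝ) ≤ ∑ v, (g' v - g v) ^ 2 :=
    Finset.sum_nonneg fun v _ => sq_nonneg _
  -- put it together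
  set A : ℝ := (Fintype.card V : ℝ)⁻¹ * ∑ v, (f v - g v) * e v with hAdef
  have hδA : δ ≤ |A| := hcorr
  have hA2 : δ ^ 2 ≤ A ^ 2 := by
    have := pow_le_pow_left₀ hδ.le hδA 2
    simpa [sq_abs] using this
  have key : A ^ 2 ≤ (Fintype.card V : ℝ)⁻¹ * ∑ v, (g' v - g v) ^ 2 := by
    have hA2' : A ^ 2 = (Fintype.card V : ℝ)⁻¹ ^ 2 * (∑ v, (g' v - g v) * e v) ^ 2 := by
      rw [hAdef, ← hA, mul_pow]
    rw [hA2']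
    calc (Fintype.card V : ℝ)⁻¹ ^ 2 * (∑ v, (g' v - g v) * e v) ^ 2
        ≤ (Fintype.card V : ℝ)⁻¹ ^ 2 * ((∑ v, (g' v - g v) ^ 2) * (Fintype.card V : ℝ)) := by
          refine mul_le_mul_of_nonneg_left ?_ (by positivity)
          exact hCS.trans (mul_le_mul_of_nonneg_left hE hT)
      _ = (Fintype.card V : ℝ)⁻¹ * ∑ v, (g' v - g v) ^ 2 := by
          field_simp
  have hfinal : (Fintype.card V : ℝ)⁻¹ * ∑ v, (g' v - g v) ^ 2
      = energy f π' - energy f π := by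
    rw [hPy, energy, energy, mul_sub]
  calc δ ^ 2 ≤ A ^ 2 := hA2
    _ ≤ (Fintype.card V : ℝ)⁻¹ * ∑ v, (g' v - g v) ^ 2 := key
    _ = energy f π' - energy f π := hfinal
end

section
/- Let $G$ be a finite abelian group and let $F : G \to \mathbb{R}$. Then $\mathbb{E}_{x,y,z \in G} F(x) F(y) F(z) F(x - 3y + 3z) = \sum_{\xi \in \hat{G}} |\hat{F}(\xi)|^2 |\hat{F}(3\xi)|^2 \geq \left(\mathbb{E}_{x \in G} F(x)\right)^4$, where $\hat{F}(\xi) = \mathbb{E}_{x \in G} F(x) \overline{\xi(x)}$ and $\hat{G}$ is the character group of $G$, with $3\xi$ denoting the character $x \mapsto \xi(x)^3$. -/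
open Finset ComplexConjugate

/-- The Fourier transform `F̂(ξ) = 𝔼_{x ∈ G} F(x) conj(ξ(x))` of a real function on a finite
abelian group. -/
noncomputable def fourierCoeff' {G : Type*} [AddCommGroup G] [Fintype G]
    (F : G → ℝ) (ξ : AddChar G ℂ) : ℂ :=
  (Fintype.card G : ℂ)⁻¹ * ∑ x, (F x : ℂ) * conj (ξ x)

private lemma conj_fc {G : Type*} [AddCommGroup G] [Fintype G] (F : G → ℝ) (ξ : AddChar G ℂ) :
    conj (fourierCoeff' F ξ) = (Fintype.card G : ℂ)⁻¹ * ∑ x, (F x : ℂ) * ξ x := by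
  simp [fourierCoeff', map_sum, map_mul, Complex.conj_ofReal, map_inv₀]

private lemma char_combine {G : Type*} [AddCommGroup G] [Fintype G] (ξ : AddChar G ℂ)
    (a b c d : G) :
    conj (ξ a) * ξ b * (conj ((ξ ^ 3) c) * (ξ ^ 3) d) = ξ (b - a + 3 • d - 3 • c) := by
  have hconj : ∀ x : G, conj (ξ x) = ξ (-x) := fun x => by
    rw [AddChar.map_neg_eq_inv, AddChar.inv_apply_eq_conj]
  simp only [AddChar.pow_apply, ← AddChar.map_nsmul_eq_pow, hconj]
  rw [← AddChar.map_add_eq_mul, ← AddChar.map_add_eq_mul, ← AddChar.map_add_eq_mul]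
  congr 1
  abel

private lemma term_eq {G : Type*} [AddCommGroup G] [Fintype G] (F : G → ℝ) (ξ : AddChar G ℂ) :
    ((‖fourierCoeff' F ξ‖ ^ 2 * ‖fourierCoeff' F (ξ ^ 3)‖ ^ 2 : ℝ) : ℂ)
      = ((Fintype.card G : ℂ)⁻¹) ^ 4 *
        ∑ a : G, ∑ b : G, ∑ c : G, ∑ d : G,
          (F a : ℂ) * F b * F c * F d * ξ (c - d + 3 • a - 3 • b) := by
  have hsq : ∀ z : ℂ, ((‖z‖ ^ 2 : ℝ) : ℂ) = z * conj z := fun z => by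
    rw [Complex.mul_conj]; norm_cast; rw [Complex.normSq_eq_norm_sq]
  rw [Complex.ofReal_mul, hsq, hsq]
  rw [show fourierCoeff' F ξ * conj (fourierCoeff' F ξ) *
      (fourierCoeff' F (ξ ^ 3) * conj (fourierCoeff' F (ξ ^ 3)))
    = (fourierCoeff' F ξ * conj (fourierCoeff' F ξ)) *
      (fourierCoeff' F (ξ ^ 3) * conj (fourierCoeff' F (ξ ^ 3))) by ring]
  rw [conj_fc, conj_fc]
  unfold fourierCoeff'
  simp only [Finset.mul_sum, Finset.sum_mul]
  refine Finset.sum_congr rfl fun x _ => Finset.sum_congr rfl fun y _ =>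
    Finset.sum_congr rfl fun z _ => Finset.sum_congr rfl fun w _ => ?_
  rw [← char_combine ξ w z y x]
  ring

private lemma sum_char' {G : Type*} [AddCommGroup G] [Fintype G] [inst : Fintype (AddChar G ℂ)]
    [DecidableEq G] (a : G) :
    ∑ ψ : AddChar G ℂ, ψ a = if a = 0 then (Fintype.card G : ℂ) else 0 := by
  obtain rfl := Subsingleton.elim inst (AddChar.instFintype G ℂ)
  exact AddChar.sum_apply_eq_ite a

private lemma sum_rev3 {G : Type*} [Fintype G] (g : G → G → G → ℂ) :
    ∑ x : G, ∑ y : G, ∑ z : G, g x y z = ∑ x : G, ∑ y : G, ∑ z : G, g z y x :=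
  calc ∑ x : G, ∑ y : G, ∑ z : G, g x y z
      = ∑ x : G, ∑ z : G, ∑ y : G, g x y z :=
        Finset.sum_congr rfl fun _ _ => Finset.sum_comm
    _ = ∑ z : G, ∑ x : G, ∑ y : G, g x y z := Finset.sum_comm
    _ = ∑ z : G, ∑ y : G, ∑ x : G, g x y z :=
        Finset.sum_congr rfl fun _ _ => Finset.sum_comm

/-- **Vertical Fourier positivity.** For a finite abelian group `G` and `F : G → ℝ`,
`𝔼_{x,y,z} F(x)F(y)F(z)F(x - 3y + 3z) = ∑_ξ |F̂(ξ)|²|F̂(3ξ)|² ≥ (𝔼 F)⁴`. -/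
theorem vertical_fourier_positivity {G : Type*} [AddCommGroup G] [Fintype G]
    [Fintype (AddChar G ℂ)] (F : G → ℝ) :
    (((Fintype.card G : ℝ) ^ 3)⁻¹ *
        ∑ x : G, ∑ y : G, ∑ z : G, F x * F y * F z * F (x - 3 • y + 3 • z) =
      ∑ ξ : AddChar G ℂ, ‖fourierCoeff' F ξ‖ ^ 2 * ‖fourierCoeff' F (ξ ^ 3)‖ ^ 2) ∧
    ((Fintype.card G : ℝ)⁻¹ * ∑ x : G, F x) ^ 4 ≤
      ((Fintype.card G : ℝ) ^ 3)⁻¹ *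
        ∑ x : G, ∑ y : G, ∑ z : G, F x * F y * F z * F (x - 3 • y + 3 • z) := by
  classical
  have hn : (Fintype.card G : ℂ) ≠ 0 := Nat.cast_ne_zero.2 Fintype.card_ne_zero
  have key : ((Fintype.card G : ℝ) ^ 3)⁻¹ *
        (∑ x : G, ∑ y : G, ∑ z : G, F x * F y * F z * F (x - 3 • y + 3 • z)) =
      ∑ ξ : AddChar G ℂ, ‖fourierCoeff' F ξ‖ ^ 2 * ‖fourierCoeff' F (ξ ^ 3)‖ ^ 2 := by
    have hC : (((Fintype.card G : ℝ) ^ 3)⁻¹ *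
          (∑ x : G, ∑ y : G, ∑ z : G, F x * F y * F z * F (x - 3 • y + 3 • z)) : ℂ)
        = ((∑ ξ : AddChar G ℂ, ‖fourierCoeff' F ξ‖ ^ 2 * ‖fourierCoeff' F (ξ ^ 3)‖ ^ 2 : ℝ) : ℂ) := by
      conv_rhs => rw [Complex.ofReal_sum]
      simp only [term_eq]
      rw [← Finset.mul_sum]
      -- push the ξ-sum inside the quadruple sum
      have hswap : ∑ ξ : AddChar G ℂ, ∑ a : G, ∑ b : G, ∑ c : G, ∑ d : G,
            (F a : ℂ) * F b * F c * F d * ξ (c - d + 3 • a - 3 • b)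
          = ∑ a : G, ∑ b : G, ∑ c : G, ∑ d : G,
            ((F a : ℂ) * F b * F c * F d) *
              ∑ ξ : AddChar G ℂ, ξ (c - d + 3 • a - 3 • b) := by
        rw [Finset.sum_comm]
        refine Finset.sum_congr rfl fun a _ => ?_
        rw [Finset.sum_comm]
        refine Finset.sum_congr rfl fun b _ => ?_
        rw [Finset.sum_comm]
        refine Finset.sum_congr rfl fun c _ => ?_
        rw [Finset.sum_comm]
        refine Finset.sum_congr rfl fun d _ => ?_
        rw [← Finset.mul_sum]
      rw [hswap]
      simp_rw [sum_char',
        show ∀ a b c d : G, c - d + 3 • a - 3 • b = (c + 3 • a - 3 • b) - d from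
          fun a b c d => by abel,
        sub_eq_zero, mul_ite, mul_zero, Finset.sum_ite_eq, Finset.mem_univ, if_true]
      -- now both sides are triple sums
      push_cast
      rw [sum_rev3 (fun x y z => (F x : ℂ) * F y * F z * F (x - 3 • y + 3 • z))]
      simp_rw [← Finset.sum_mul]
      rw [show ((Fintype.card G : ℂ)⁻¹) ^ 4 *
          ((∑ a : G, ∑ b : G, ∑ c : G,
            (F a : ℂ) * F b * F c * F (c + 3 • a - 3 • b)) * (Fintype.card G : ℂ))
        = ((Fintype.card G : ℂ) ^ 3)⁻¹ *
          (∑ a : G, ∑ b : G, ∑ c : G, (F a : ℂ) * F b * F c * F (c + 3 • a - 3 • b)) by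
          field_simp]
      congr 1
      refine Finset.sum_congr rfl fun x _ => Finset.sum_congr rfl fun y _ =>
        Finset.sum_congr rfl fun z _ => ?_
      rw [show z + 3 • x - 3 • y = z - 3 • y + 3 • x by abel]
      ring
    exact_mod_cast hC
  refine ⟨key, ?_⟩
  rw [key]
  have h1 : fourierCoeff' F 1 = (((Fintype.card G : ℝ)⁻¹ * ∑ x : G, F x : ℝ) : ℂ) := by
    simp [fourierCoeff', map_one]
  have hterm : ‖fourierCoeff' F 1‖ ^ 2 * ‖fourierCoeff' F (1 ^ 3)‖ ^ 2
      = ((Fintype.card G : ℝ)⁻¹ * ∑ x : G, F x) ^ 4 := by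
    rw [one_pow, h1, Complex.norm_real, Real.norm_eq_abs, ← abs_pow, ← abs_mul,
      abs_of_nonneg (by positivity)]
    ring
  calc ((Fintype.card G : ℝ)⁻¹ * ∑ x : G, F x) ^ 4
      = ‖fourierCoeff' F 1‖ ^ 2 * ‖fourierCoeff' F (1 ^ 3)‖ ^ 2 := hterm.symm
    _ ≤ ∑ ξ : AddChar G ℂ, ‖fourierCoeff' F ξ‖ ^ 2 * ‖fourierCoeff' F (ξ ^ 3)‖ ^ 2 :=
        Finset.single_le_sum
          (f := fun ξ : AddChar G ℂ => ‖fourierCoeff' F ξ‖ ^ 2 * ‖fourierCoeff' F (ξ ^ 3)‖ ^ 2)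
          (fun ξ _ => by positivity) (Finset.mem_univ 1)
end
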